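/- Let ϑₙ = π(1 − 2⁻ⁿ), ζₙ = e^{iϑₙ}, uₙ(z) = Re((ζₙ + z)/(ζₙ − z)), γ = (γₙ) ∈ ℓ¹, and u = Σₙ γₙ uₙ. Then for every k ≥ 1, lim_{r→1⁻} (1 − r) · u(r ζ_k) = 2 γ_k. -/

import Mathlib

open Complex MeasureTheory Filter Set

noncomputable section

/-- `ϑₙ = π(1 - 2⁻⁽ⁿ⁺¹⁾)` (indexing from `n = 0`, so this is the paper's `ϑ_{n+1}`). -/
def theta (n : ℕ) : ℝ := Real.pi * (1 - (1 / 2 : ℝ) ^ (n + 1))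

def zeta (n : ℕ) : ℂ := Complex.exp (theta n * Complex.I)

def uP (n : ℕ) (z : ℂ) : ℝ := ((zeta n + z) / (zeta n - z)).re

lemma zeta_abs (n : ℕ) : ‖zeta n‖ = 1 := by
  simpa [zeta] using Complex.norm_exp_ofReal_mul_I (theta n)

lemma zeta_ne_zero (n : ℕ) : zeta n ≠ 0 :=
  Complex.exp_ne_zero _

lemma theta_mem (n : ℕ) : 0 < theta n ∧ theta n < Real.pi := by
  have hp : (0:ℝ) < (1/2:ℝ)^(n+1) := by positivity
  have hl : (1/2:ℝ)^(n+1) < 1 := by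
    apply pow_lt_one₀ (by norm_num) (by norm_num) (by omega)
  rw [theta]
  constructor
  · nlinarith [Real.pi_pos]
  · nlinarith [Real.pi_pos]

lemma zeta_inj : Function.Injective zeta := by
  intro n m h
  rw [zeta, zeta, Complex.exp_eq_exp_iff_exists_int] at h
  obtain ⟨j, hj⟩ := h
  have hre := congrArg Complex.im hj
  simp [Complex.add_im, Complex.mul_im, Complex.I_im, Complex.I_re] at hre
  -- hre : theta n = theta m + j * (2 * π)
  have hn := theta_mem n
  have hm := theta_mem m
  have hj0 : (j : ℝ) = 0 := by
    by_contra hj0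
    have h1 : (1:ℝ) ≤ |(j:ℝ)| := by
      have : j ≠ 0 := by exact_mod_cast hj0
      exact_mod_cast Int.one_le_abs (by exact_mod_cast this)
    have habs : |theta n - theta m| < Real.pi := abs_sub_lt_of_nonneg_of_lt
      (le_of_lt hn.1) hn.2 (le_of_lt hm.1) hm.2
    have : theta n - theta m = j * (2 * Real.pi) := by linarith
    rw [this, abs_mul] at habs
    have : |2 * Real.pi| = 2 * Real.pi := abs_of_pos (by positivity)
    nlinarith [Real.pi_pos, abs_nonneg ((j:ℝ))]
  have hteq : theta n = theta m := by rw [hj0] at hre; linarith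
  have : ((1:ℝ)/2)^(n+1) = (1/2)^(m+1) := by
    have hpi := Real.pi_ne_zero
    rw [theta, theta] at hteq
    have := mul_left_cancel₀ hpi hteq
    linarith
  by_contra hne
  rcases Nat.lt_or_ge n m with h | h
  · have := pow_lt_pow_right_of_lt_one₀ (by norm_num : (0:ℝ) < 1/2)
      (by norm_num) (by omega : n + 1 < m + 1)
    linarith
  · have h' : m < n := lt_of_le_of_ne h fun e => hne e.symm
    have := pow_lt_pow_right_of_lt_one₀ (by norm_num : (0:ℝ) < 1/2)
      (by norm_num) (by omega : m + 1 < n + 1)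
    linarith

/-- For `γ ∈ ℓ¹` and `u = Σ γₙ uₙ`, along the radius toward `ζ_k` one has
`(1 - r) u(r ζ_k) → 2 γ_k` as `r → 1⁻`. -/
theorem radial_limit_detects_coefficient (γ : ℕ → ℝ)
    (hγ : Summable fun n : ℕ => |γ n|)
    (u : ℂ → ℝ) (hu : u = fun z : ℂ => ∑' n : ℕ, γ n * uP n z) (k : ℕ) :
    Filter.Tendsto (fun r : ℝ => (1 - r) * u ((r : ℂ) * zeta k))
      (nhdsWithin 1 (Set.Iio (1 : ℝ))) (nhds (2 * γ k)) := by
  subst hu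
  set F : ℝ → ℕ → ℝ := fun r n => (1 - r) * (γ n * uP n ((r : ℂ) * zeta k)) with hF
  set g : ℕ → ℝ := fun n => if n = k then 2 * γ k else 0 with hg
  have hgsum : (∑' n, g n) = 2 * γ k := tsum_ite_eq k (fun _ => 2 * γ k)
  have key : Tendsto (fun r : ℝ => ∑' n, F r n)
      (nhdsWithin 1 (Set.Iio (1 : ℝ))) (nhds (∑' n, g n)) := by
    apply tendsto_tsum_of_dominated_convergence
      (bound := fun n => 2 * |γ n|) (hγ.mul_left 2)
    · intro n
      by_cases hn : n = k
      · subst hn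
        simp only [hg, if_pos rfl]
        have heq : ∀ᶠ r : ℝ in nhdsWithin 1 (Set.Iio (1 : ℝ)),
            F r n = γ n * (1 + r) := by
          filter_upwards [self_mem_nhdsWithin] with r hr
          have hr1 : r < 1 := hr
          have hne : (1 : ℂ) - (r : ℂ) ≠ 0 := by
            intro h
            have : (r : ℂ) = 1 := by linear_combination -h
            exact absurd (by exact_mod_cast this) (ne_of_lt hr1)
          have huP : uP n ((r : ℂ) * zeta n) = (1 + r) / (1 - r) := by
            rw [uP]
            have : (zeta n + (r : ℂ) * zeta n) / (zeta n - (r : ℂ) * zeta n)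
                = ((1 : ℂ) + r) / (1 - r) := by
              rw [show zeta n + (r:ℂ) * zeta n = ((1:ℂ)+r) * zeta n by ring,
                  show zeta n - (r:ℂ) * zeta n = ((1:ℂ)-r) * zeta n by ring,
                  mul_div_mul_right _ _ (zeta_ne_zero n)]
            rw [this]
            have : ((1 : ℂ) + r) / (1 - r) = (((1 + r) / (1 - r) : ℝ) : ℂ) := by
              push_cast; ring
            rw [this, Complex.ofReal_re]
          have hne' : (1:ℝ) - r ≠ 0 := by intro h; linarith [h]
          rw [hF]
          simp only
          rw [huP]
          field_simp
        rw [tendsto_congr' heq]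
        have : Tendsto (fun r : ℝ => γ n * (1 + r)) (nhds 1)
            (nhds (γ n * (1 + 1))) := by
          exact (tendsto_const_nhds.mul (tendsto_const_nhds.add tendsto_id))
        have h2 : Tendsto (fun r : ℝ => γ n * (1 + r))
            (nhdsWithin 1 (Set.Iio (1:ℝ))) (nhds (γ n * (1 + 1))) :=
          this.mono_left nhdsWithin_le_nhds
        convert h2 using 2 <;> ring
      · simp only [hg, if_neg hn]
        have hzne : zeta n - zeta k ≠ 0 := sub_ne_zero.mpr fun h => hn (zeta_inj h)
        have hcont : Tendsto (fun r : ℝ => γ n * uP n ((r : ℂ) * zeta k))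
            (nhdsWithin 1 (Set.Iio (1 : ℝ))) (nhds (γ n * uP n (zeta k))) := by
          apply Tendsto.const_mul
          have h1 : Tendsto (fun r : ℝ => (r : ℂ) * zeta k)
              (nhdsWithin 1 (Set.Iio (1 : ℝ))) (nhds (zeta k)) := by
            have : Tendsto (fun r : ℝ => (r : ℂ) * zeta k) (nhds 1)
                (nhds ((1 : ℂ) * zeta k)) :=
              ((Complex.continuous_ofReal.tendsto 1).mul tendsto_const_nhds)
            simpa using this.mono_left nhdsWithin_le_nhds
          have h2 : ContinuousAt (uP n) (zeta k) := by
            apply Complex.continuous_re.continuousAt.comp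
            exact ContinuousAt.div (by fun_prop) (by fun_prop) hzne
          exact h2.tendsto.comp h1
        have h0 : Tendsto (fun r : ℝ => (1 - r))
            (nhdsWithin 1 (Set.Iio (1 : ℝ))) (nhds 0) := by
          have : Tendsto (fun r : ℝ => (1 - r)) (nhds 1) (nhds (1 - 1)) :=
            tendsto_const_nhds.sub tendsto_id
          simpa using this.mono_left nhdsWithin_le_nhds
        have := h0.mul hcont
        simpa using this
    · have hmem : Set.Ioo (0:ℝ) 1 ∈ nhdsWithin 1 (Set.Iio (1 : ℝ)) := by
        apply mem_nhdsWithin.mpr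
        exact ⟨Set.Ioi 0, isOpen_Ioi, by norm_num, fun x hx => ⟨hx.1, hx.2⟩⟩
      filter_upwards [hmem] with r hr n
      have hr0 : 0 < r := hr.1
      have hr1 : r < 1 := hr.2
      have habsz : ‖(r : ℂ) * zeta k‖ = r := by
        rw [norm_mul, zeta_abs, Complex.norm_real, Real.norm_of_nonneg hr0.le, mul_one]
      have hdenom : 1 - r ≤ ‖zeta n - (r : ℂ) * zeta k‖ := by
        have := norm_sub_norm_le (zeta n) ((r : ℂ) * zeta k)
        rw [zeta_abs, habsz] at this
        linarith [this]
      have hnum : ‖zeta n + (r : ℂ) * zeta k‖ ≤ 1 + r := by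
        have := norm_add_le (zeta n) ((r : ℂ) * zeta k)
        rw [zeta_abs, habsz] at this
        linarith
      have hdpos : (0:ℝ) < ‖zeta n - (r : ℂ) * zeta k‖ := by
        linarith
      have huPle : |uP n ((r : ℂ) * zeta k)| ≤ (1 + r) / (1 - r) := by
        calc |uP n ((r : ℂ) * zeta k)|
            ≤ ‖(zeta n + (r : ℂ) * zeta k) / (zeta n - (r : ℂ) * zeta k)‖ :=
              Complex.abs_re_le_norm _
          _ = ‖zeta n + (r : ℂ) * zeta k‖ /
              ‖zeta n - (r : ℂ) * zeta k‖ := norm_div _ _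
          _ ≤ (1 + r) / (1 - r) :=
              div_le_div₀ (by linarith) hnum (by linarith) hdenom
      have : ‖F r n‖ = (1 - r) * (|γ n| * |uP n ((r : ℂ) * zeta k)|) := by
        rw [hF]
        simp only [Real.norm_eq_abs, abs_mul, abs_of_pos (by linarith : (0:ℝ) < 1 - r)]
      rw [this]
      have h1 : |γ n| * |uP n ((r : ℂ) * zeta k)| ≤ |γ n| * ((1 + r) / (1 - r)) :=
        mul_le_mul_of_nonneg_left huPle (abs_nonneg _)
      have hne' : (1:ℝ) - r ≠ 0 := by intro h; linarith [h]
      have h2 : (1 - r) * (|γ n| * ((1 + r) / (1 - r))) = (1 + r) * |γ n| := by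
        field_simp
      calc (1 - r) * (|γ n| * |uP n ((r : ℂ) * zeta k)|)
          ≤ (1 - r) * (|γ n| * ((1 + r) / (1 - r))) :=
            mul_le_mul_of_nonneg_left h1 (by linarith)
        _ = (1 + r) * |γ n| := h2
        _ ≤ 2 * |γ n| := mul_le_mul_of_nonneg_right (by linarith) (abs_nonneg _)
  have hrw : (fun r : ℝ => (1 - r) * ∑' n, γ n * uP n ((r : ℂ) * zeta k))
      = fun r : ℝ => ∑' n, F r n := by
    funext r
    rw [hF, tsum_mul_left]
  rw [hrw]
  rw [hgsum] at key
  exact key
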